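/- Let 𝓜 = {A^{(1)},…,A^{(N)}} with A^{(k)} = I + S^{(k)} as above, and Ĥ^{(N)} = A^{(1)}⋯A^{(N)}. Then the generalized spectral radius of 𝓜 equals ρ(Ĥ^{(N)})^{1/N}; i.e., the ordered product A^{(1)}⋯A^{(N)} realizes the generalized spectral radius of the family. -/

import Mathlib

open Matrix BigOperators Filter

open scoped NNReal ENNReal Topology

/-- The spectral radius of a real square matrix: supremum of moduli of complex eigenvalues. -/
noncomputable def specRad {d : ℕ} (M : Matrix (Fin d) (Fin d) ℝ) : ℝ :=
  sSup ((fun z : ℂ => ‖z‖) '' spectrum ℂ (M.map Complex.ofReal))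

/-- `rhoK A k` = max over products of `k` matrices from the family `A` of the `k`-th root
of the spectral radius of the product. -/
noncomputable def rhoK {d n : ℕ} (A : Fin n → Matrix (Fin d) (Fin d) ℝ) (k : ℕ) : ℝ :=
  ⨆ f : Fin k → Fin n, specRad ((List.ofFn fun i => A (f i)).prod) ^ ((1 : ℝ) / (k : ℝ))

/-- `Amat N k` is the matrix `I + S^(k)` (0-indexed `k`). -/
def Amat (N : ℕ) (k : ℕ) : Matrix (Fin N) (Fin N) ℝ :=
  fun i j => (if i = j then 1 else 0) + (if (i : ℕ) = k ∧ (j : ℕ) ≠ k then 2 else 0)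

section FinalProofSetup
attribute [local instance] Matrix.linftyOpNormedRing Matrix.linftyOpNormedAlgebra
end FinalProofSetup


section Comb
variable {N : ℕ}

/-- one step of the column-sum dynamics: append letter `a`. -/
def rstep (a : Fin N) (c : Fin N → ℝ) : Fin N → ℝ :=
  fun j => c j + if j = a then 0 else 2 * c a

/-- iterate over a word (processed from the head). -/
def rstepW : List (Fin N) → (Fin N → ℝ) → (Fin N → ℝ)
  | [], c => c
  | a :: w, c => rstepW w (rstep a c)

lemma rstepW_append (u v : List (Fin N)) (c : Fin N → ℝ) :
    rstepW (u ++ v) c = rstepW v (rstepW u c) := by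
  induction u generalizing c with
  | nil => rfl
  | cons a u ih => simp [rstepW, ih]

lemma rstep_nonneg {a : Fin N} {c : Fin N → ℝ} (h : ∀ j, 0 ≤ c j) : ∀ j, 0 ≤ rstep a c j := by
  intro j
  have hj := h j; have ha := h a
  unfold rstep
  split <;> linarith

lemma rstep_mono_perm {σ : Equiv.Perm (Fin N)} {c c' : Fin N → ℝ}
    (h : ∀ j, c j ≤ c' (σ j)) (a : Fin N) (j : Fin N) :
    rstep a c j ≤ rstep (σ a) c' (σ j) := by
  unfold rstep
  rcases eq_or_ne j a with rfl | hja
  · simp [h j]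
  · rw [if_neg hja, if_neg (fun hc => hja (σ.injective hc))]
    have h1 := h a
    have h2 := h j
    linarith

lemma rstep_exchange {a b : Fin N} {c : Fin N → ℝ} (hab : c b ≤ c a) (j : Fin N) :
    rstep b c j ≤ rstep a c (Equiv.swap a b j) := by
  rcases eq_or_ne a b with rfl | hne
  · simp
  rcases eq_or_ne j b with rfl | hjb
  · rw [Equiv.swap_apply_right]
    simp [rstep, hne.symm]
    exact hab
  rcases eq_or_ne j a with rfl | hja
  · rw [Equiv.swap_apply_left]
    simp [rstep, hne, hne.symm]
    linarith
  · rw [Equiv.swap_apply_of_ne_of_ne hja hjb]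
    simp [rstep, hja, hjb]
    linarith

/-- combined greedy step: if `c ≤ c' ∘ σ` pointwise and `c' p` is the max entry of `c'`,
then `rstep a c ≤ (rstep p c') ∘ τ` for some permutation `τ`. -/
lemma rstep_greedy {σ : Equiv.Perm (Fin N)} {c c' : Fin N → ℝ} {p : Fin N}
    (h : ∀ j, c j ≤ c' (σ j)) (hp : ∀ j, c' j ≤ c' p) (a : Fin N) :
    ∃ τ : Equiv.Perm (Fin N), ∀ j, rstep a c j ≤ rstep p c' (τ j) := by
  refine ⟨σ.trans (Equiv.swap p (σ a)), fun j => ?_⟩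
  exact (rstep_mono_perm h a j).trans (rstep_exchange (hp (σ a)) (σ j))

end Comb

section Rainbow
variable {N : ℕ} (hN : 0 < N)

def pivot (t : ℕ) : Fin N := ⟨t % N, Nat.mod_lt t hN⟩

def Rst : ℕ → (Fin N → ℝ)
  | 0 => 1
  | t + 1 => rstep (pivot hN t) (Rst t)

lemma Rst_nonneg : ∀ t j, 0 ≤ Rst hN t j := by
  intro t
  induction t with
  | zero => intro j; simp [Rst]
  | succ t ih => exact rstep_nonneg ih

lemma pivot_add_N (t : ℕ) : pivot hN (t + N) = pivot hN t := by
  simp [pivot, Nat.add_mod]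

lemma pivot_ne {t s : ℕ} (h0 : 0 < s) (hs : s < N) : pivot hN (t + s) ≠ pivot hN t := by
  simp only [pivot, Ne, Fin.mk.injEq]
  intro h
  have hd : N ∣ t + s - t :=
    (Nat.modEq_iff_dvd' (Nat.le_add_right t s)).mp (h.symm : t % N = (t + s) % N)
  simp only [Nat.add_sub_cancel_left] at hd
  exact absurd (Nat.le_of_dvd h0 hd) (by omega)

lemma Rst_sorted : ∀ t i, i + 1 < N →
    Rst hN t (pivot hN (t + i + 1)) ≤ Rst hN t (pivot hN (t + i)) := by
  intro t
  induction t with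
  | zero => intro i hi; simp [Rst]
  | succ t ih =>
    intro i hi
    have hnn := Rst_nonneg hN t
    by_cases hcase : i + 2 < N
    · have h1 : pivot hN (t + 1 + i + 1) ≠ pivot hN t := by
        have : t + 1 + i + 1 = t + (i + 2) := by ring
        rw [this]; exact pivot_ne hN (by omega) hcase
      have h2 : pivot hN (t + 1 + i) ≠ pivot hN t := by
        have : t + 1 + i = t + (i + 1) := by ring
        rw [this]; exact pivot_ne hN (by omega) (by omega)
      have key : Rst hN t (pivot hN (t + 1 + i + 1)) ≤ Rst hN t (pivot hN (t + 1 + i)) := by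
        have e1 : t + 1 + i + 1 = t + (i + 1) + 1 := by ring
        have e2 : t + 1 + i = t + (i + 1) := by ring
        rw [e1, e2]; exact ih (i + 1) (by omega)
      show rstep _ _ _ ≤ rstep _ _ _
      unfold rstep
      rw [if_neg h1, if_neg h2]
      linarith
    · -- i + 2 = N : wrap-around case
      have hiN : i + 2 = N := by omega
      have h2 : pivot hN (t + 1 + i) ≠ pivot hN t := by
        have : t + 1 + i = t + (i + 1) := by ring
        rw [this]; exact pivot_ne hN (by omega) (by omega)
      have h1 : pivot hN (t + 1 + i + 1) = pivot hN t := by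
        have : t + 1 + i + 1 = t + N := by omega
        rw [this]; exact pivot_add_N hN t
      show rstep _ _ _ ≤ rstep _ _ _
      unfold rstep
      rw [h1, if_pos rfl, if_neg h2]
      have := hnn (pivot hN (t + 1 + i))
      have := hnn (pivot hN t)
      linarith

lemma Rst_chain : ∀ t i, i < N → Rst hN t (pivot hN (t + i)) ≤ Rst hN t (pivot hN t) := by
  intro t i
  induction i with
  | zero => intro _; simp
  | succ i ih =>
    intro hi
    exact (Rst_sorted hN t i hi).trans (ih (by omega))

lemma Rst_max (t : ℕ) (j : Fin N) : Rst hN t j ≤ Rst hN t (pivot hN t) := by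
  have : ∃ i, i < N ∧ pivot hN (t + i) = j := by
    refine ⟨((j : ℕ) + (N - t % N)) % N, Nat.mod_lt _ hN, ?_⟩
    have hj : (j : ℕ) < N := j.isLt
    simp only [pivot, Fin.ext_iff]
    obtain ⟨q, hq⟩ : N ∣ t + (N - t % N) :=
      ⟨t / N + 1, by
        have h1 := Nat.div_add_mod t N
        have h2 := Nat.mod_lt t hN
        rw [Nat.mul_add, Nat.mul_one]
        omega⟩
    have harr : t + ((j : ℕ) + (N - t % N)) % N ≡ (j : ℕ) [MOD N] := by
      calc t + ((j : ℕ) + (N - t % N)) % N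
          ≡ t + ((j : ℕ) + (N - t % N)) [MOD N] := by
            exact Nat.ModEq.add_left t (Nat.mod_modEq _ N)
        _ = (j : ℕ) + N * q := by omega
        _ ≡ (j : ℕ) [MOD N] :=
            ((Nat.modEq_iff_dvd' (Nat.le_add_right _ _)).mpr
              (by simpa using dvd_mul_right N q)).symm
    simpa [Nat.ModEq, Nat.mod_eq_of_lt hj] using harr
  obtain ⟨i, hi, hij⟩ := this
  rw [← hij]
  exact Rst_chain hN t i hi

/-- Main combinatorial lemma: every word's state is dominated, up to a permutation of the
coordinates, by the rainbow word's state. -/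
lemma rainbow_dominates : ∀ (w : List (Fin N)) (t : ℕ) (c : Fin N → ℝ),
    (∃ σ : Equiv.Perm (Fin N), ∀ j, c j ≤ Rst hN t (σ j)) →
    ∃ τ : Equiv.Perm (Fin N), ∀ j, rstepW w c j ≤ Rst hN (t + w.length) (τ j) := by
  intro w
  induction w with
  | nil => intro t c h; simpa [rstepW] using h
  | cons a w ih =>
    intro t c ⟨σ, hσ⟩
    obtain ⟨τ₁, hτ₁⟩ := rstep_greedy hσ (Rst_max hN t) a
    have hstep : ∀ j, rstep a c j ≤ Rst hN (t + 1) (τ₁ j) := hτ₁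
    obtain ⟨τ, hτ⟩ := ih (t + 1) (rstep a c) ⟨τ₁, hstep⟩
    refine ⟨τ, fun j => ?_⟩
    have : t + (a :: w).length = t + 1 + w.length := by simp; ring
    rw [this]
    exact hτ j

def rbList (t : ℕ) : List (Fin N) := (List.range t).map (pivot hN)

lemma rbList_length (t : ℕ) : (rbList hN t).length = t := by simp [rbList]

lemma rstepW_rbList (t : ℕ) : rstepW (rbList hN t) 1 = Rst hN t := by
  induction t with
  | zero => rfl
  | succ t ih =>
    have : rbList hN (t + 1) = rbList hN t ++ [pivot hN t] := by
      simp [rbList, List.range_succ]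
    rw [this, rstepW_append, ih]
    rfl

/-- Entry-sum domination by the rainbow word. -/
lemma sum_rstepW_le (w : List (Fin N)) :
    ∑ j, rstepW w 1 j ≤ ∑ j, rstepW (rbList hN w.length) 1 j := by
  obtain ⟨τ, hτ⟩ := rainbow_dominates hN w 0 1 ⟨1, fun j => by simp [Rst]⟩
  rw [rstepW_rbList]
  calc ∑ j, rstepW w 1 j ≤ ∑ j, Rst hN w.length (τ j) := by
        refine Finset.sum_le_sum fun j _ => ?_
        simpa using hτ j
    _ = ∑ j, Rst hN w.length j := Equiv.sum_comp τ _
section MatLink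
variable {N : ℕ} (hN : 0 < N)

/-- product of the matrices along a word. -/
def Pw (w : List (Fin N)) : Matrix (Fin N) (Fin N) ℝ :=
  (w.map (fun a : Fin N => Amat N (a : ℕ))).prod

@[simp] lemma Pw_nil : Pw ([] : List (Fin N)) = 1 := rfl

lemma Pw_cons (a : Fin N) (w : List (Fin N)) : Pw (a :: w) = Amat N (a : ℕ) * Pw w := by
  simp [Pw]

lemma Pw_append (u v : List (Fin N)) : Pw (u ++ v) = Pw u * Pw v := by
  simp [Pw]

lemma vecMul_Amat (c : Fin N → ℝ) (a : Fin N) :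
    c ᵥ* (Amat N (a : ℕ)) = rstep a c := by
  funext j
  have hsum : ∀ i, c i * Amat N (a : ℕ) i j
      = (if i = j then c i else 0) + (if i = a then (if j = a then 0 else 2 * c i) else 0) := by
    intro i
    unfold Amat
    by_cases h1 : i = j <;> by_cases h2 : i = a <;> by_cases h3 : j = a <;>
      simp_all [Fin.val_eq_val, Fin.val_ne_iff] <;> ring
  show ∑ i, c i * Amat N (a : ℕ) i j = _
  rw [Finset.sum_congr rfl (fun i _ => hsum i), Finset.sum_add_distrib]
  rw [Finset.sum_ite_eq' Finset.univ j c, Finset.sum_ite_eq' Finset.univ a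
    (fun i => if j = a then 0 else 2 * c i)]
  simp only [Finset.mem_univ, if_true]
  unfold rstep
  by_cases hja : j = a <;> simp [hja]

lemma vecMul_Pw (w : List (Fin N)) (c : Fin N → ℝ) :
    c ᵥ* Pw w = rstepW w c := by
  induction w generalizing c with
  | nil => simp [rstepW]
  | cons a w ih =>
    rw [Pw_cons, ← Matrix.vecMul_vecMul, vecMul_Amat]
    exact ih (rstep a c)

/-- sum of all entries of a matrix -/
def Esum (M : Matrix (Fin N) (Fin N) ℝ) : ℝ := ∑ i, ∑ j, M i j

lemma Esum_eq_sum_vecMul (M : Matrix (Fin N) (Fin N) ℝ) :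
    Esum M = ∑ j, ((1 : Fin N → ℝ) ᵥ* M) j := by
  unfold Esum
  refine (Finset.sum_comm (f := fun i j => M i j)).trans ?_
  refine Finset.sum_congr rfl fun j _ => ?_
  simp [Matrix.vecMul, dotProduct]

lemma Esum_Pw_le_rainbow (w : List (Fin N)) :
    Esum (Pw w) ≤ Esum (Pw (rbList hN w.length)) := by
  rw [Esum_eq_sum_vecMul, Esum_eq_sum_vecMul, vecMul_Pw, vecMul_Pw]
  simpa [rbList_length] using sum_rstepW_le hN w

lemma Amat_nonneg (k : ℕ) (i j : Fin N) : 0 ≤ Amat N k i j := by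
  unfold Amat; split <;> split <;> norm_num

lemma Amat_le_three (k : ℕ) (i j : Fin N) : Amat N k i j ≤ 3 := by
  unfold Amat; split <;> split <;> norm_num

lemma Pw_nonneg (w : List (Fin N)) (i j : Fin N) : 0 ≤ Pw w i j := by
  induction w generalizing i j with
  | nil => by_cases h : i = j <;> simp [Matrix.one_apply, h]
  | cons a w ih =>
    rw [Pw_cons, Matrix.mul_apply]
    exact Finset.sum_nonneg fun l _ => mul_nonneg (Amat_nonneg _ _ _) (ih l j)

lemma Esum_nonneg {M : Matrix (Fin N) (Fin N) ℝ} (h : ∀ i j, 0 ≤ M i j) : 0 ≤ Esum M :=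
  Finset.sum_nonneg fun i _ => Finset.sum_nonneg fun j _ => h i j

lemma Esum_mul_le {X Y : Matrix (Fin N) (Fin N) ℝ} (hX : ∀ i j, 0 ≤ X i j)
    (hY : ∀ i j, 0 ≤ Y i j) : Esum (X * Y) ≤ Esum X * Esum Y := by
  have hYE : ∀ l, ∑ j, Y l j ≤ Esum Y := by
    intro l
    exact Finset.single_le_sum (f := fun l => ∑ j, Y l j)
      (fun i _ => Finset.sum_nonneg fun j _ => hY i j) (Finset.mem_univ l)
  calc Esum (X * Y) = ∑ i, ∑ l, X i l * ∑ j, Y l j := by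
        unfold Esum
        refine Finset.sum_congr rfl fun i _ => ?_
        simp only [Matrix.mul_apply]
        rw [Finset.sum_comm]
        simp [Finset.mul_sum]
    _ ≤ ∑ i, ∑ l, X i l * Esum Y := by
        refine Finset.sum_le_sum fun i _ => Finset.sum_le_sum fun l _ => ?_
        exact mul_le_mul_of_nonneg_left (hYE l) (hX i l)
    _ = Esum X * Esum Y := by
        unfold Esum
        rw [Finset.sum_mul]
        exact Finset.sum_congr rfl fun i _ => by rw [Finset.sum_mul]

lemma Esum_Pw_le_pow (w : List (Fin N)) :
    Esum (Pw w) ≤ (N : ℝ) * (3 * (N : ℝ) ^ 2) ^ w.length := by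
  induction w with
  | nil =>
    have h : Esum (1 : Matrix (Fin N) (Fin N) ℝ) = N := by
      simp [Esum, Matrix.one_apply]
    simp [h]
  | cons a w ih =>
    rw [Pw_cons]
    calc Esum (Amat N (a:ℕ) * Pw w) ≤ Esum (Amat N (a:ℕ)) * Esum (Pw w) :=
          Esum_mul_le (Amat_nonneg _) (Pw_nonneg _)
      _ ≤ (3 * (N:ℝ)^2) * ((N:ℝ) * (3 * (N:ℝ)^2) ^ w.length) := by
          refine mul_le_mul ?_ ih (Esum_nonneg (Pw_nonneg _)) (by positivity)
          calc Esum (Amat N (a:ℕ)) ≤ ∑ _i : Fin N, ∑ _j : Fin N, (3:ℝ) :=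
                Finset.sum_le_sum fun i _ => Finset.sum_le_sum fun j _ => Amat_le_three _ i j
            _ = 3 * (N:ℝ)^2 := by simp [Finset.sum_const]; ring
      _ = (N:ℝ) * (3 * (N:ℝ)^2) ^ (a :: w).length := by rw [List.length_cons, pow_succ]; ring
end MatLink
section HNpow
variable {N : ℕ}

/-- the ordered full product `A⁽⁰⁾⋯A⁽ᴺ⁻¹⁾`. -/
def HNmat (N : ℕ) : Matrix (Fin N) (Fin N) ℝ := ((List.range N).map (Amat N)).prod

lemma Pw_rbList_N (hN : 0 < N) : Pw (rbList hN N) = HNmat N := by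
  have hmap : (rbList hN N).map (fun a : Fin N => Amat N (a : ℕ)) = (List.range N).map (Amat N) := by
    unfold rbList
    rw [List.map_map]
    refine List.map_congr_left fun i hi => ?_
    have h : i < N := List.mem_range.mp hi
    simp [pivot, Function.comp, Nat.mod_eq_of_lt h]
  unfold Pw HNmat
  exact congrArg List.prod hmap

lemma rbList_mulN_add (hN : 0 < N) (m t : ℕ) (ht : t ≤ N) :
    rbList hN (m * N + t) = rbList hN (m * N) ++ (List.range t).map (fun i => pivot hN i) := by
  unfold rbList
  rw [List.range_add, List.map_append, List.map_map]
  congr 1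
  refine List.map_congr_left fun i hi => ?_
  have : (m * N + i) % N = i % N := by
    rw [Nat.add_comm, Nat.add_mul_mod_self_right]
  simp [pivot, Function.comp, Fin.ext_iff, this]

lemma Pw_rb_mulN (hN : 0 < N) (m : ℕ) : Pw (rbList hN (m * N)) = HNmat N ^ m := by
  induction m with
  | zero => simp [rbList, Pw]
  | succ m ih =>
    have : (m + 1) * N = m * N + N := by ring
    rw [this, rbList_mulN_add hN m N le_rfl, Pw_append, ih]
    have h2 : (List.range N).map (fun i => pivot hN i) = rbList hN N := rfl
    rw [h2, Pw_rbList_N, pow_succ]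

lemma HNpow_nonneg (hN : 0 < N) (m : ℕ) (i j : Fin N) : 0 ≤ (HNmat N ^ m) i j := by
  rw [← Pw_rb_mulN hN m]; exact Pw_nonneg _ i j

/-- The key combinatorial bound: the entry sum of an arbitrary word product of length `k`
is at most a constant times the entry sum of `Ĥ^(k / N)`. -/
lemma key_bound (hN : 0 < N) (w : List (Fin N)) :
    Esum (Pw w) ≤ Esum (HNmat N ^ (w.length / N)) * ((N : ℝ) * (3 * (N:ℝ)^2) ^ N) := by
  set t := w.length
  have h1 : Esum (Pw w) ≤ Esum (Pw (rbList hN t)) := Esum_Pw_le_rainbow hN w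
  have ht : t / N * N + t % N = t := by
    rw [Nat.mul_comm]; exact Nat.div_add_mod t N
  have hsplit : rbList hN t = rbList hN (t / N * N) ++ (List.range (t % N)).map (pivot hN) := by
    conv_lhs => rw [← ht]
    exact rbList_mulN_add hN (t / N) (t % N) (Nat.mod_lt t hN).le
  rw [hsplit, Pw_append, Pw_rb_mulN] at h1
  refine h1.trans ?_
  have hrest : Esum (Pw ((List.range (t % N)).map (pivot hN)))
      ≤ (N : ℝ) * (3 * (N:ℝ)^2) ^ N := by
    refine (Esum_Pw_le_pow _).trans ?_
    have hbase : (1 : ℝ) ≤ 3 * (N:ℝ)^2 := by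
      have : (1 : ℝ) ≤ (N : ℝ) := by exact_mod_cast hN
      nlinarith
    have hlen : ((List.range (t % N)).map (pivot hN)).length ≤ N := by
      simp [(Nat.mod_lt t hN).le]
    have := pow_le_pow_right₀ hbase hlen
    have hNpos : (0:ℝ) ≤ N := Nat.cast_nonneg N
    nlinarith [pow_nonneg (by linarith : (0:ℝ) ≤ 3 * (N:ℝ)^2) (((List.range (t % N)).map (pivot hN)).length)]
  calc Esum (HNmat N ^ (t / N) * Pw ((List.range (t % N)).map (pivot hN)))
      ≤ Esum (HNmat N ^ (t / N)) * Esum (Pw ((List.range (t % N)).map (pivot hN))) :=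
        Esum_mul_le (HNpow_nonneg hN _) (Pw_nonneg _)
    _ ≤ Esum (HNmat N ^ (t / N)) * ((N : ℝ) * (3 * (N:ℝ)^2) ^ N) := by
        refine mul_le_mul_of_nonneg_left hrest ?_
        exact Esum_nonneg fun i j => HNpow_nonneg hN _ i j
end HNpow
section Spectral

attribute [local instance] Matrix.linftyOpNormedRing Matrix.linftyOpNormedAlgebra

variable {N : ℕ}

lemma mapC_pow (M : Matrix (Fin N) (Fin N) ℝ) (m : ℕ) :
    (M ^ m).map Complex.ofReal = (M.map Complex.ofReal) ^ m := by
  show Complex.ofRealHom.mapMatrix (M ^ m) = (Complex.ofRealHom.mapMatrix M) ^ m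
  rw [map_pow]

lemma spectrum_nonempty (hN : 0 < N) (M : Matrix (Fin N) (Fin N) ℝ) :
    (spectrum ℂ (M.map Complex.ofReal)).Nonempty := by
  haveI : Nonempty (Fin N) := ⟨⟨0, hN⟩⟩
  exact spectrum.nonempty _

lemma absSpec_bddAbove (hN : 0 < N) (M : Matrix (Fin N) (Fin N) ℝ) :
    BddAbove ((fun z : ℂ => ‖z‖) '' spectrum ℂ (M.map Complex.ofReal)) := by
  haveI : Nonempty (Fin N) := ⟨⟨0, hN⟩⟩
  refine ⟨‖M.map Complex.ofReal‖, ?_⟩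
  rintro x ⟨z, hz, rfl⟩
  show ‖z‖ ≤ _
  exact spectrum.norm_le_norm_of_mem hz

lemma specRad_le_norm (hN : 0 < N) (M : Matrix (Fin N) (Fin N) ℝ) :
    specRad M ≤ ‖M.map Complex.ofReal‖ := by
  haveI : Nonempty (Fin N) := ⟨⟨0, hN⟩⟩
  refine csSup_le ((spectrum_nonempty hN M).image _) ?_
  rintro x ⟨z, hz, rfl⟩
  show ‖z‖ ≤ _
  exact spectrum.norm_le_norm_of_mem hz

lemma exists_abs_eq_specRad (hN : 0 < N) (M : Matrix (Fin N) (Fin N) ℝ) :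
    ∃ z ∈ spectrum ℂ (M.map Complex.ofReal), ‖z‖ = specRad M := by
  haveI : Nonempty (Fin N) := ⟨⟨0, hN⟩⟩
  have hc : IsCompact ((fun z : ℂ => ‖z‖) '' spectrum ℂ (M.map Complex.ofReal)) :=
    (spectrum.isCompact _).image continuous_norm
  have := hc.sSup_mem ((spectrum_nonempty hN M).image _)
  obtain ⟨z, hz, hz2⟩ := this
  exact ⟨z, hz, hz2⟩

lemma specRad_nonneg (hN : 0 < N) (M : Matrix (Fin N) (Fin N) ℝ) : 0 ≤ specRad M := by
  obtain ⟨z, _, hz⟩ := exists_abs_eq_specRad hN M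
  rw [← hz]
  exact norm_nonneg z

lemma pow_specRad_le (hN : 0 < N) (M : Matrix (Fin N) (Fin N) ℝ) (m : ℕ) :
    specRad M ^ m ≤ specRad (M ^ m) := by
  obtain ⟨z, hz, hzr⟩ := exists_abs_eq_specRad hN M
  have hzm : z ^ m ∈ spectrum ℂ ((M ^ m).map Complex.ofReal) := by
    rw [mapC_pow]
    exact spectrum.pow_image_subset (M.map Complex.ofReal) m ⟨z, hz, rfl⟩
  have : ‖z ^ m‖ ≤ specRad (M ^ m) :=
    le_csSup (absSpec_bddAbove hN (M ^ m)) ⟨z ^ m, hzm, rfl⟩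
  rwa [norm_pow, hzr] at this

lemma spectralRadius_eq (hN : 0 < N) (M : Matrix (Fin N) (Fin N) ℝ) :
    spectralRadius ℂ (M.map Complex.ofReal) = ENNReal.ofReal (specRad M) := by
  haveI : Nonempty (Fin N) := ⟨⟨0, hN⟩⟩
  apply le_antisymm
  · refine iSup₂_le fun z hz => ?_
    have h1 : ‖z‖ ≤ specRad M :=
      le_csSup (absSpec_bddAbove hN M) ⟨z, hz, rfl⟩
    rw [← ENNReal.ofReal_coe_nnreal]
    exact ENNReal.ofReal_le_ofReal (by simpa using h1)
  · obtain ⟨z, hz, hzr⟩ := exists_abs_eq_specRad hN M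
    rw [← hzr]
    have hle : (‖z‖₊ : ℝ≥0∞) ≤ spectralRadius ℂ (M.map Complex.ofReal) := by
      exact le_iSup₂ (f := fun k (_ : k ∈ spectrum ℂ (M.map Complex.ofReal)) => (‖k‖₊ : ℝ≥0∞)) z hz
    refine le_trans (le_of_eq ?_) hle
    rw [← coe_nnnorm, ENNReal.ofReal_coe_nnreal]
end Spectral
section Spectral2

attribute [local instance] Matrix.linftyOpNormedRing Matrix.linftyOpNormedAlgebra

variable {N : ℕ}

lemma norm_le_Esum {M : Matrix (Fin N) (Fin N) ℝ} (h : ∀ i j, 0 ≤ M i j) :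
    ‖M.map Complex.ofReal‖ ≤ Esum M := by
  rw [Matrix.linfty_opNorm_def]
  have hsup : (Finset.univ.sup fun i => ∑ j, ‖(M.map Complex.ofReal) i j‖₊)
      ≤ (⟨Esum M, Esum_nonneg h⟩ : ℝ≥0) := by
    refine Finset.sup_le fun i _ => ?_
    refine NNReal.coe_le_coe.mp ?_
    push_cast
    have hthis : ∀ j, ‖(M.map Complex.ofReal) i j‖ = M i j := by
      intro j
      simp [Matrix.map_apply, Complex.norm_real, Real.norm_eq_abs, abs_of_nonneg (h i j)]
    rw [Finset.sum_congr rfl fun j _ => hthis j]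
    unfold Esum
    exact Finset.single_le_sum (f := fun i => ∑ j, M i j)
      (fun i _ => Finset.sum_nonneg fun j _ => h i j) (Finset.mem_univ i)
  exact_mod_cast hsup

lemma Esum_le_norm {M : Matrix (Fin N) (Fin N) ℝ} (h : ∀ i j, 0 ≤ M i j) :
    Esum M ≤ (N : ℝ) * ‖M.map Complex.ofReal‖ := by
  have hrow : ∀ i : Fin N, ∑ j, M i j ≤ ‖M.map Complex.ofReal‖ := by
    intro i
    rw [Matrix.linfty_opNorm_def]
    have h1 : ((∑ j, ‖(M.map Complex.ofReal) i j‖₊ : ℝ≥0) : ℝ)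
        ≤ ((Finset.univ.sup fun i => ∑ j, ‖(M.map Complex.ofReal) i j‖₊ : ℝ≥0) : ℝ) := by
      exact_mod_cast Finset.le_sup (f := fun i => ∑ j, ‖(M.map Complex.ofReal) i j‖₊)
        (Finset.mem_univ i)
    refine le_trans (le_of_eq ?_) h1
    push_cast
    refine Finset.sum_congr rfl fun j _ => ?_
    simp [Matrix.map_apply, Complex.norm_real, Real.norm_eq_abs, abs_of_nonneg (h i j)]
  calc Esum M ≤ ∑ _i : Fin N, ‖M.map Complex.ofReal‖ :=
        Finset.sum_le_sum fun i _ => hrow i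
    _ = (N : ℝ) * ‖M.map Complex.ofReal‖ := by simp [Finset.sum_const]

lemma Pw_diag_ge_one (w : List (Fin N)) (i : Fin N) : 1 ≤ Pw w i i := by
  induction w with
  | nil => simp [Matrix.one_apply]
  | cons a w ih =>
    rw [Pw_cons, Matrix.mul_apply]
    have hterm : (1 : ℝ) ≤ Amat N (a : ℕ) i i * Pw w i i := by
      have h1 : (1 : ℝ) ≤ Amat N (a : ℕ) i i := by
        unfold Amat; simp
      nlinarith [ih]
    refine le_trans hterm ?_
    exact Finset.single_le_sum (f := fun l => Amat N (a : ℕ) i l * Pw w l i)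
      (fun l _ => mul_nonneg (Amat_nonneg _ _ _) (Pw_nonneg _ _ _)) (Finset.mem_univ i)

lemma gelfand_real (hN : 0 < N) (M : Matrix (Fin N) (Fin N) ℝ) :
    Filter.Tendsto (fun m : ℕ => ‖(M ^ m).map Complex.ofReal‖ ^ ((1:ℝ) / m)) Filter.atTop
      (𝓝 (specRad M)) := by
  haveI : Nonempty (Fin N) := ⟨⟨0, hN⟩⟩
  have h := spectrum.pow_norm_pow_one_div_tendsto_nhds_spectralRadius (M.map Complex.ofReal)
  rw [spectralRadius_eq hN M] at h
  have h2 := (ENNReal.tendsto_toReal (ENNReal.ofReal_ne_top)).comp h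
  rw [ENNReal.toReal_ofReal (specRad_nonneg hN M)] at h2
  have h3 : (fun m : ℕ => (ENNReal.ofReal (‖(M.map Complex.ofReal) ^ m‖ ^ ((1:ℝ) / m))).toReal)
      = fun m : ℕ => ‖(M ^ m).map Complex.ofReal‖ ^ ((1:ℝ) / m) := by
    funext m
    rw [ENNReal.toReal_ofReal (Real.rpow_nonneg (norm_nonneg _) _), mapC_pow]
  rw [← h3]
  exact h2

end Spectral2
section Main

attribute [local instance] Matrix.linftyOpNormedRing Matrix.linftyOpNormedAlgebra

variable {N : ℕ}

lemma prod_ofFn_eq_Pw {k : ℕ} (f : Fin k → Fin N) :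
    (List.ofFn fun i => Amat N ((f i) : ℕ)).prod = Pw (List.ofFn f) := by
  unfold Pw
  rw [List.map_ofFn]
  rfl

lemma rhoK_nonneg (hN : 0 < N) (k : ℕ) :
    0 ≤ rhoK (fun j : Fin N => Amat N (j : ℕ)) k :=
  Real.iSup_nonneg fun f => Real.rpow_nonneg (specRad_nonneg hN _) _

/-- the constant in the key bound -/
noncomputable def CC (N : ℕ) : ℝ := (N : ℝ) ^ 2 * (3 * (N : ℝ) ^ 2) ^ N

lemma CC_pos (hN : 0 < N) : 0 < CC N := by
  have : (0:ℝ) < N := by exact_mod_cast hN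
  unfold CC
  positivity

/-- the upper-bounding sequence -/
noncomputable def gseq (N : ℕ) (k : ℕ) : ℝ :=
  (CC N * ‖(HNmat N ^ (k / N)).map Complex.ofReal‖) ^ ((1 : ℝ) / (k : ℝ))

lemma specRad_Pw_le (hN : 0 < N) (w : List (Fin N)) :
    specRad (Pw w) ≤ CC N * ‖(HNmat N ^ (w.length / N)).map Complex.ofReal‖ := by
  calc specRad (Pw w) ≤ ‖(Pw w).map Complex.ofReal‖ := specRad_le_norm hN _
    _ ≤ Esum (Pw w) := norm_le_Esum (Pw_nonneg w)
    _ ≤ Esum (HNmat N ^ (w.length / N)) * ((N : ℝ) * (3 * (N:ℝ)^2) ^ N) := key_bound hN w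
    _ ≤ ((N : ℝ) * ‖(HNmat N ^ (w.length / N)).map Complex.ofReal‖)
          * ((N : ℝ) * (3 * (N:ℝ)^2) ^ N) := by
        refine mul_le_mul_of_nonneg_right (Esum_le_norm (HNpow_nonneg hN _)) ?_
        have h0 : (0:ℝ) < N := by exact_mod_cast hN
        positivity
    _ = CC N * ‖(HNmat N ^ (w.length / N)).map Complex.ofReal‖ := by unfold CC; ring

set_option maxHeartbeats 1000000 in
lemma rhoK_le_gseq (hN : 0 < N) (k : ℕ) :
    rhoK (fun j : Fin N => Amat N (j : ℕ)) k ≤ gseq N k := by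
  haveI : Nonempty (Fin N) := ⟨⟨0, hN⟩⟩
  unfold rhoK
  refine ciSup_le fun f => ?_
  simp only [prod_ofFn_eq_Pw]
  unfold gseq
  refine Real.rpow_le_rpow (specRad_nonneg hN _) ?_ (by positivity)
  have := specRad_Pw_le hN (List.ofFn f)
  simpa [List.length_ofFn] using this

lemma norm_HNpow_ge_one (hN : 0 < N) (m : ℕ) :
    1 ≤ ‖(HNmat N ^ m).map Complex.ofReal‖ := by
  have hnn := HNpow_nonneg hN m
  have hdiag : ∀ i, 1 ≤ (HNmat N ^ m) i i := by
    rw [← Pw_rb_mulN hN m]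
    exact fun i => Pw_diag_ge_one _ i
  have hEsum : (N : ℝ) ≤ Esum (HNmat N ^ m) := by
    calc (N : ℝ) = ∑ _i : Fin N, (1:ℝ) := by simp
      _ ≤ ∑ i, (HNmat N ^ m) i i := Finset.sum_le_sum fun i _ => hdiag i
      _ ≤ Esum (HNmat N ^ m) := by
          unfold Esum
          refine Finset.sum_le_sum fun i _ => ?_
          exact Finset.single_le_sum (f := fun j => (HNmat N ^ m) i j)
            (fun j _ => hnn i j) (Finset.mem_univ i)
  have hle := Esum_le_norm hnn
  have h0 : (0:ℝ) < N := by exact_mod_cast hN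
  nlinarith

lemma one_le_specRad_HN (hN : 0 < N) : 1 ≤ specRad (HNmat N) := by
  refine ge_of_tendsto' (gelfand_real hN (HNmat N)) fun m => ?_
  calc (1:ℝ) = 1 ^ ((1:ℝ)/m) := (Real.one_rpow _).symm
    _ ≤ ‖(HNmat N ^ m).map Complex.ofReal‖ ^ ((1:ℝ)/m) :=
        Real.rpow_le_rpow zero_le_one (norm_HNpow_ge_one hN m) (by positivity)

lemma tendsto_div_cast (hN : 0 < N) :
    Filter.Tendsto (fun k : ℕ => ((k / N : ℕ) : ℝ) / (k : ℝ)) Filter.atTop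
      (𝓝 ((1 : ℝ) / (N : ℝ))) := by
  have h0 : (0:ℝ) < N := by exact_mod_cast hN
  have hlow : Filter.Tendsto (fun k : ℕ => (1:ℝ)/(N:ℝ) - 1/(k:ℝ)) Filter.atTop
      (𝓝 ((1:ℝ)/(N:ℝ))) := by
    have := tendsto_one_div_atTop_nhds_zero_nat (𝕜 := ℝ)
    have h2 := (tendsto_const_nhds (x := (1:ℝ)/(N:ℝ)) (f := Filter.atTop (α := ℕ))).sub this
    simpa using h2
  refine tendsto_of_tendsto_of_tendsto_of_le_of_le' hlow tendsto_const_nhds ?_ ?_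
  · filter_upwards [Filter.eventually_ge_atTop 1] with k hk
    have hk0 : (0:ℝ) < k := by exact_mod_cast hk
    have hdm : (N : ℝ) * ((k / N : ℕ) : ℝ) + ((k % N : ℕ) : ℝ) = (k : ℝ) := by
      exact_mod_cast congrArg (Nat.cast : ℕ → ℝ) (Nat.div_add_mod k N)
    have hmod : ((k % N : ℕ) : ℝ) < N := by exact_mod_cast Nat.mod_lt k hN
    have hq0 : (0:ℝ) ≤ ((k / N : ℕ) : ℝ) := by positivity
    rw [div_sub_div _ _ (ne_of_gt h0) (ne_of_gt hk0), div_le_div_iff₀ (by positivity) hk0]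
    nlinarith
  · filter_upwards [Filter.eventually_ge_atTop 1] with k hk
    have hk0 : (0:ℝ) < k := by exact_mod_cast hk
    have hdm : (N : ℝ) * ((k / N : ℕ) : ℝ) + ((k % N : ℕ) : ℝ) = (k : ℝ) := by
      exact_mod_cast congrArg (Nat.cast : ℕ → ℝ) (Nat.div_add_mod k N)
    have hmod : (0:ℝ) ≤ ((k % N : ℕ) : ℝ) := by positivity
    rw [div_le_div_iff₀ hk0 h0]
    nlinarith

lemma tendsto_gseq (hN : 0 < N) :
    Filter.Tendsto (gseq N) Filter.atTop (𝓝 (specRad (HNmat N) ^ ((1:ℝ) / (N:ℝ)))) := by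
  have h0 : (0:ℝ) < N := by exact_mod_cast hN
  set r := specRad (HNmat N) with hr
  have hrpos : (0:ℝ) < r := lt_of_lt_of_le zero_lt_one (one_le_specRad_HN hN)
  -- factor 1
  have t1 : Filter.Tendsto (fun k : ℕ => (CC N) ^ ((1:ℝ)/(k:ℝ))) Filter.atTop (𝓝 1) := by
    have hcc := CC_pos hN
    have heq : (fun k : ℕ => (CC N) ^ ((1:ℝ)/(k:ℝ)))
        = fun k : ℕ => Real.exp (Real.log (CC N) * ((1:ℝ)/(k:ℝ))) := by
      funext k
      rw [Real.rpow_def_of_pos hcc]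
    rw [heq]
    have hlim : Filter.Tendsto (fun k : ℕ => Real.log (CC N) * ((1:ℝ)/(k:ℝ))) Filter.atTop
        (𝓝 0) := by
      have := tendsto_one_div_atTop_nhds_zero_nat.const_mul (Real.log (CC N))
      simpa using this
    have := (Real.continuous_exp.tendsto 0).comp hlim
    simpa [Function.comp_def] using this
  -- factor 2
  have t2 : Filter.Tendsto (fun k : ℕ => k / N) Filter.atTop Filter.atTop := by
    refine Filter.tendsto_atTop_atTop.mpr fun b => ⟨b * N, fun a ha => ?_⟩
    exact (Nat.le_div_iff_mul_le hN).mpr ha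
  have t3 : Filter.Tendsto (fun k : ℕ => ‖(HNmat N ^ (k / N)).map Complex.ofReal‖
      ^ ((1:ℝ)/((k / N : ℕ) : ℝ))) Filter.atTop (𝓝 r) :=
    (gelfand_real hN (HNmat N)).comp t2
  have t5 : Filter.Tendsto (fun k : ℕ => (‖(HNmat N ^ (k / N)).map Complex.ofReal‖
      ^ ((1:ℝ)/((k / N : ℕ) : ℝ))) ^ (((k / N : ℕ) : ℝ)/(k:ℝ))) Filter.atTop
      (𝓝 (r ^ ((1:ℝ)/(N:ℝ)))) :=
    t3.rpow (tendsto_div_cast hN) (Or.inl (ne_of_gt hrpos))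
  have tprod := t1.mul t5
  rw [one_mul] at tprod
  refine Filter.Tendsto.congr' ?_ tprod
  filter_upwards [Filter.eventually_ge_atTop N] with k hk
  have hm1 : 1 ≤ k / N := (Nat.one_le_div_iff hN).mpr hk
  have hk1 : 1 ≤ k := le_trans hN hk
  have hmR : (0:ℝ) < ((k / N : ℕ) : ℝ) := by exact_mod_cast hm1
  have hkR : (0:ℝ) < (k : ℝ) := by exact_mod_cast hk1
  have hnorm := norm_HNpow_ge_one hN (k / N)
  have hexp : (1:ℝ)/(k:ℝ) = ((1:ℝ)/((k / N : ℕ) : ℝ)) * (((k / N : ℕ) : ℝ)/(k:ℝ)) := by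
    field_simp
  have hXk : (‖(HNmat N ^ (k / N)).map Complex.ofReal‖ ^ ((1:ℝ)/((k / N : ℕ) : ℝ)))
        ^ (((k / N : ℕ) : ℝ)/(k:ℝ))
      = ‖(HNmat N ^ (k / N)).map Complex.ofReal‖ ^ ((1:ℝ)/(k:ℝ)) := by
    rw [← Real.rpow_mul (norm_nonneg _), ← hexp]
  show CC N ^ ((1:ℝ)/(k:ℝ)) * _ = gseq N k
  rw [hXk, ← Real.mul_rpow (le_of_lt (CC_pos hN)) (norm_nonneg _)]
  rfl

end Main
section Final

attribute [local instance] Matrix.linftyOpNormedRing Matrix.linftyOpNormedAlgebra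

lemma rhoK_lower (N : ℕ) (hN : 0 < N) (m : ℕ) (hm : 1 ≤ m) :
    specRad (HNmat N) ^ ((1:ℝ)/(N:ℝ)) ≤ rhoK (fun j : Fin N => Amat N (j : ℕ)) (m * N) := by
  haveI : Nonempty (Fin N) := ⟨⟨0, hN⟩⟩
  have h0 : (0:ℝ) < N := by exact_mod_cast hN
  have hm0 : (0:ℝ) < m := by exact_mod_cast hm
  set r := specRad (HNmat N) with hrdef
  have hr0 : 0 ≤ r := specRad_nonneg hN _
  have hofn : List.ofFn (fun i : Fin (m*N) => pivot hN (i : ℕ)) = rbList hN (m*N) := by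
    apply List.ext_getElem
    · simp [rbList]
    · intro i h1 h2
      simp [rbList, pivot]
  have hb : BddAbove (Set.range fun f : Fin (m*N) → Fin N =>
      specRad ((List.ofFn fun i => Amat N ((f i : ℕ))).prod) ^ ((1:ℝ)/((m*N : ℕ) : ℝ))) :=
    (Set.finite_range _).bddAbove
  have hle := le_ciSup hb (fun i : Fin (m*N) => pivot hN (i : ℕ))
  have hval : (List.ofFn fun i : Fin (m*N) => Amat N (((fun i : Fin (m*N) => pivot hN (i : ℕ)) i : Fin N) : ℕ)).prod
      = HNmat N ^ m := by
    rw [show (List.ofFn fun i : Fin (m*N) => Amat N (((fun i : Fin (m*N) => pivot hN (i : ℕ)) i : Fin N) : ℕ))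
        = (List.ofFn (fun i : Fin (m*N) => pivot hN (i : ℕ))).map (fun a : Fin N => Amat N (a : ℕ)) by
      rw [List.map_ofFn]; rfl]
    rw [hofn]
    exact Pw_rb_mulN hN m
  rw [hval] at hle
  calc r ^ ((1:ℝ)/(N:ℝ)) = (r ^ m) ^ ((1:ℝ)/((m*N : ℕ) : ℝ)) := by
        rw [← Real.rpow_natCast r m, ← Real.rpow_mul hr0]
        congr 1
        push_cast
        field_simp
    _ ≤ specRad (HNmat N ^ m) ^ ((1:ℝ)/((m*N : ℕ) : ℝ)) :=
        Real.rpow_le_rpow (pow_nonneg hr0 m) (pow_specRad_le hN _ m) (by positivity)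
    _ ≤ rhoK (fun j : Fin N => Amat N (j : ℕ)) (m * N) := by
        unfold rhoK
        exact hle

end Final
section FinalTheorem
attribute [local instance] Matrix.linftyOpNormedRing Matrix.linftyOpNormedAlgebra

theorem stmt_19 (N : ℕ) (hN : 0 < N) :
    Filter.limsup (rhoK (fun j : Fin N => Amat N (j : ℕ))) Filter.atTop
      = specRad (((List.range N).map (Amat N)).prod) ^ ((1 : ℝ) / (N : ℝ)) := by

  show Filter.limsup (rhoK (fun j : Fin N => Amat N (j : ℕ))) Filter.atTop
      = specRad (HNmat N) ^ ((1 : ℝ) / (N : ℝ))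
  have hub : rhoK (fun j : Fin N => Amat N (j : ℕ)) ≤ᶠ[Filter.atTop] gseq N :=
    Filter.Eventually.of_forall (rhoK_le_gseq hN)
  have hg := tendsto_gseq hN
  have hcob : Filter.IsCoboundedUnder (· ≤ ·) Filter.atTop
      (rhoK (fun j : Fin N => Amat N (j : ℕ))) :=
    Filter.isCoboundedUnder_le_of_eventually_le Filter.atTop
      (Filter.Eventually.of_forall fun k => rhoK_nonneg hN k)
  have hupper : Filter.limsup (rhoK (fun j : Fin N => Amat N (j : ℕ))) Filter.atTop
      ≤ specRad (HNmat N) ^ ((1 : ℝ) / (N : ℝ)) := by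
    have h := Filter.limsup_le_limsup hub hcob hg.isBoundedUnder_le
    rwa [hg.limsup_eq] at h
  have hfreq : ∃ᶠ k in Filter.atTop,
      specRad (HNmat N) ^ ((1 : ℝ) / (N : ℝ)) ≤ rhoK (fun j : Fin N => Amat N (j : ℕ)) k := by
    rw [Filter.frequently_atTop]
    intro a
    refine ⟨(a + 1) * N, ?_, rhoK_lower N hN (a + 1) (Nat.succ_le_succ (Nat.zero_le a))⟩
    calc a ≤ a + 1 := Nat.le_succ a
      _ ≤ (a + 1) * N := Nat.le_mul_of_pos_right _ hN
  have hlower := le_limsup_of_frequently_le hfreq (hg.isBoundedUnder_le.mono_le hub)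
  exact le_antisymm hupper hlower


end FinalTheorem
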